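/- For all points $x,y \in R(r,1)$ collinear with the origin, on opposite rays from the origin (angle $\angle x0y = \pi$), and with $|y| \le |x|$, it holds that $\mathrm{th}\frac{\delta_{R(r,1)}(x,y)}{2} = \max\left\{ \frac{|x|+|y|}{1+|x||y|},\ \frac{r(|x|+|y|)}{|x||y|+r^2},\ \frac{(|x|+|y|)(1+r)}{2(1-|x|)(|y|-r)+(|x|+|y|)(1+r)} \right\}$. -/

import Mathlib

set_option maxHeartbeats 1000000

open Real Set

/-- The annular ring `R(r,1) = {z : r < |z| < 1}`. -/
def annulus (r : ℝ) : Set ℂ := {z : ℂ | r < ‖z‖ ∧ ‖z‖ < 1}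

/-- The triangular ratio metric `s_G`. -/
noncomputable def sMetric (G : Set ℂ) (x y : ℂ) : ℝ :=
  ‖x - y‖ /
    sInf ((fun z => ‖x - z‖ + ‖z - y‖) '' frontier G)

/-- The `j*`-metric. -/
noncomputable def jStar (G : Set ℂ) (x y : ℂ) : ℝ :=
  ‖x - y‖ /
    (‖x - y‖ +
      2 * min (Metric.infDist x (frontier G)) (Metric.infDist y (frontier G)))

/-- The (absolute) cross-ratio `|a,x,b,y|`. -/
noncomputable def crossRatio (a x b y : ℂ) : ℝ :=
  (‖a - b‖ * ‖x - y‖) / (‖a - x‖ * ‖b - y‖)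

/-- The Möbius (Seittenranta) metric `δ_G`. -/
noncomputable def deltaMetric (G : Set ℂ) (x y : ℂ) : ℝ :=
  sSup ((fun p : ℂ × ℂ => Real.log (1 + crossRatio p.1 x p.2 y)) '' (frontier G ×ˢ frontier G))

lemma tanh_half_log (u : ℝ) (hu : 0 < u) :
    Real.tanh (Real.log u / 2) = (u - 1) / (u + 1) := by
  set v := Real.exp (Real.log u / 2) with hvdef
  have hv : v * v = u := by
    rw [hvdef, ← Real.exp_add, add_halves, Real.exp_log hu]
  have hvpos : 0 < v := Real.exp_pos _
  rw [Real.tanh_eq_sinh_div_cosh, Real.sinh_eq, Real.cosh_eq, Real.exp_neg, ← hvdef]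
  rw [div_eq_div_iff (by positivity) (by positivity)]
  have hvne : v ≠ 0 := ne_of_gt hvpos
  field_simp
  nlinarith [hv]

lemma div_add_two_mono {a b : ℝ} (ha : 0 ≤ a) (hab : a ≤ b) :
    a / (a + 2) ≤ b / (b + 2) := by
  rw [div_le_div_iff₀ (by linarith) (by linarith)]
  nlinarith

lemma div_add_two_max (a b : ℝ) (ha : 0 ≤ a) (hb : 0 ≤ b) :
    max a b / (max a b + 2) = max (a / (a + 2)) (b / (b + 2)) := by
  rcases le_total a b with h | h
  · rw [max_eq_right h, max_eq_right (div_add_two_mono ha h)]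
  · rw [max_eq_left h, max_eq_left (div_add_two_mono hb h)]

lemma div_div_add_two (N D : ℝ) (hD : 0 < D) :
    (N / D) / (N / D + 2) = N / (N + 2 * D) := by
  have hDne : D ≠ 0 := ne_of_gt hD
  rcases eq_or_ne (N + 2 * D) 0 with h | h
  · have h2 : N / D + 2 = 0 := by rw [div_add' _ _ _ hDne, h, zero_div]
    rw [h, h2, div_zero, div_zero]
  · rw [div_add' _ _ _ hDne]
    field_simp

lemma isOpen_annulus (r : ℝ) : IsOpen (annulus r) := by
  have h1 : IsOpen {z : ℂ | r < ‖z‖} :=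
    isOpen_lt continuous_const continuous_norm
  have h2 : IsOpen {z : ℂ | ‖z‖ < 1} :=
    isOpen_lt continuous_norm continuous_const
  exact (h1.inter h2)

lemma closure_annulus (r : ℝ) (hr0 : 0 < r) (hr1 : r < 1) :
    closure (annulus r) = {z : ℂ | r ≤ ‖z‖ ∧ ‖z‖ ≤ 1} := by
  apply le_antisymm
  · apply closure_minimal
    · intro z hz
      exact ⟨le_of_lt hz.1, le_of_lt hz.2⟩
    · exact (isClosed_le continuous_const continuous_norm).inter
        (isClosed_le continuous_norm continuous_const)
  · intro z hz
    obtain ⟨h1, h2⟩ := hz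
    set m : ℝ := (r + 1) / 2 with hm
    have hmr : r < m := by simp [hm]; linarith
    have hm1 : m < 1 := by simp [hm]; linarith
    set az := ‖z‖ with haz
    have haz0 : 0 < az := lt_of_lt_of_le hr0 h1
    have key : Filter.Tendsto
        (fun n : ℕ => ((1 : ℝ) + (1 / ((n : ℝ) + 2)) * (m / az - 1)) • z)
        Filter.atTop (nhds z) := by
      have h0 : Filter.Tendsto (fun n : ℕ => (1 / ((n : ℝ) + 2))) Filter.atTop (nhds 0) := by
        have h2 : Filter.Tendsto (fun n : ℕ => ((n : ℝ) + 2)) Filter.atTop Filter.atTop :=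
          Filter.tendsto_atTop_add_const_right _ 2 tendsto_natCast_atTop_atTop
        simpa [Pi.inv_def] using h2.inv_tendsto_atTop
      have hc : Filter.Tendsto (fun n : ℕ => ((1 : ℝ) + (1 / ((n : ℝ) + 2)) * (m / az - 1)))
          Filter.atTop (nhds 1) := by
        have := (h0.mul_const (m / az - 1)).const_add (1 : ℝ)
        simpa using this
      simpa using hc.smul_const z
    apply mem_closure_of_tendsto key
    filter_upwards with n
    have hlam0 : 0 < 1 / ((n : ℝ) + 2) := by positivity
    have hlam1 : 1 / ((n : ℝ) + 2) ≤ 1 / 2 := by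
      apply div_le_div_of_nonneg_left <;> norm_num
    set l : ℝ := 1 / ((n : ℝ) + 2) with hl
    have hcpos : 0 < 1 + l * (m / az - 1) := by
      have : m / az > 0 := by positivity
      nlinarith
    have habs : ‖((1 : ℝ) + l * (m / az - 1)) • z‖
        = (1 + l * (m / az - 1)) * az := by
      rw [Complex.real_smul, norm_mul, Complex.norm_real, Real.norm_eq_abs, abs_of_pos hcpos]
    have hval : (1 + l * (m / az - 1)) * az = (1 - l) * az + l * m := by
      field_simp
      ring
    constructor
    · rw [habs, hval]; nlinarith
    · rw [habs, hval]; nlinarith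

lemma frontier_annulus (r : ℝ) (hr0 : 0 < r) (hr1 : r < 1) :
    frontier (annulus r) = {z : ℂ | ‖z‖ = r ∨ ‖z‖ = 1} := by
  rw [frontier, closure_annulus r hr0 hr1, (isOpen_annulus r).interior_eq]
  ext z
  simp only [mem_diff, mem_setOf_eq, annulus, not_and, not_lt]
  constructor
  · rintro ⟨⟨h1, h2⟩, h3⟩
    rcases eq_or_lt_of_le h1 with h | h
    · exact Or.inl h.symm
    · exact Or.inr (le_antisymm h2 (h3 h))
  · rintro (h | h)
    · exact ⟨⟨le_of_eq h.symm, by rw [h]; linarith⟩,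
        fun hc => absurd hc (by rw [h]; exact lt_irrefl r)⟩
    · exact ⟨⟨by rw [h]; linarith, le_of_eq h⟩, fun _ => le_of_eq h.symm⟩

/-- For points `x,y ∈ R(r,1)` on opposite rays from the origin (angle `∠x0y = π`)
with `|y| ≤ |x|`, `th(δ_{R(r,1)}(x,y)/2)` equals the maximum of the three stated
quantities. -/
theorem stmt9 (r : ℝ) (hr0 : 0 < r) (hr1 : r < 1) (x y : ℂ)
    (hx : x ∈ annulus r) (hy : y ∈ annulus r)
    (hray : SameRay ℝ x (-y)) (hle : ‖y‖ ≤ ‖x‖) :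
    Real.tanh (deltaMetric (annulus r) x y / 2) =
      max (max ((‖x‖ + ‖y‖) / (1 + ‖x‖ * ‖y‖))
          (r * (‖x‖ + ‖y‖) / (‖x‖ * ‖y‖ + r ^ 2)))
        ((‖x‖ + ‖y‖) * (1 + r) /
          (2 * (1 - ‖x‖) * (‖y‖ - r)
            + (‖x‖ + ‖y‖) * (1 + r))) := by
  obtain ⟨hxr, hx1⟩ := hx
  obtain ⟨hyr, hy1⟩ := hy
  set s := ‖x‖ with hs
  set t := ‖y‖ with ht
  have hs0 : 0 < s := lt_trans hr0 hxr
  have ht0 : 0 < t := lt_trans hr0 hyr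
  have hx0 : x ≠ 0 := by
    intro h
    rw [h, norm_zero] at hs
    linarith
  have hy0 : y ≠ 0 := by
    intro h
    rw [h, norm_zero] at ht
    linarith
  obtain ⟨c, hc0, hcx⟩ := hray.exists_pos_left hx0 (neg_ne_zero.2 hy0)
  have hcs : c * s = t := by
    have := congrArg norm hcx
    rwa [Complex.real_smul, norm_mul, Complex.norm_real, Real.norm_eq_abs, norm_neg,
      abs_of_pos hc0, ← hs, ← ht] at this
  have hyx : y = -((c : ℝ) : ℂ) * x := by
    have : -(c • x) = y := by rw [hcx, neg_neg]
    rw [← this, Complex.real_smul]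
    ring
  have hsC : (s : ℂ) ≠ 0 := Complex.ofReal_ne_zero.mpr (ne_of_gt hs0)
  have hceq : c = t / s := by field_simp [← hcs]; exact hcs
  have habsmul : ∀ k : ℝ, ‖(k : ℂ) * x‖ = |k| * s := fun k => by
    rw [norm_mul, Complex.norm_real, Real.norm_eq_abs, ← hs]
  have hxy : ‖x - y‖ = s + t := by
    have e : x - y = ((1 + c : ℝ) : ℂ) * x := by rw [hyx]; push_cast; ring
    rw [e, habsmul, abs_of_pos (by linarith)]
    linear_combination hcs
  -- value of crossRatio at the special collinear points
  have hA : ∀ ρ σ : ℝ, 0 ≤ ρ → 0 ≤ σ →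
      crossRatio (((ρ / s : ℝ) : ℂ) * x) x (-(((σ / s : ℝ) : ℂ) * x)) y
        = ((ρ + σ) * (s + t)) / (|ρ - s| * |σ - t|) := by
    intro ρ σ hρ hσ
    have e1 : ((ρ / s : ℝ) : ℂ) * x - (-(((σ / s : ℝ) : ℂ) * x))
        = (((ρ + σ) / s : ℝ) : ℂ) * x := by push_cast; ring
    have e2 : ((ρ / s : ℝ) : ℂ) * x - x = (((ρ - s) / s : ℝ) : ℂ) * x := by
      push_cast; field_simp
    have e3 : -(((σ / s : ℝ) : ℂ) * x) - y = (((t - σ) / s : ℝ) : ℂ) * x := by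
      rw [hyx, hceq]; push_cast; field_simp; ring
    simp only [crossRatio]
    rw [e1, e2, e3, hxy, habsmul, habsmul, habsmul, abs_div, abs_div, abs_div,
      abs_of_pos hs0, abs_of_nonneg (by positivity : (0:ℝ) ≤ ρ + σ), abs_sub_comm t σ]
    field_simp
  -- the four corner values
  set C1 := 2 * (s + t) / ((1 - s) * (1 - t)) with hC1
  set C2 := 2 * r * (s + t) / ((s - r) * (t - r)) with hC2
  set C3 := (1 + r) * (s + t) / ((1 - s) * (t - r)) with hC3
  set M := max (max C1 C2) C3 with hM
  have h1s : (0:ℝ) < 1 - s := by linarith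
  have h1t : (0:ℝ) < 1 - t := by linarith
  have hsr : (0:ℝ) < s - r := by linarith
  have htr : (0:ℝ) < t - r := by linarith
  have hstpos : (0:ℝ) < s + t := by linarith
  have hC1pos : 0 < C1 := by rw [hC1]; positivity
  have hC2pos : 0 < C2 := by rw [hC2]; positivity
  have hC3pos : 0 < C3 := by rw [hC3]; positivity
  have hMC1 : C1 ≤ M := le_trans (le_max_left C1 C2) (le_max_left _ C3)
  have hMC2 : C2 ≤ M := le_trans (le_max_right C1 C2) (le_max_left _ C3)
  have hMC3 : C3 ≤ M := le_max_right _ C3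
  have hMpos : 0 < M := lt_of_lt_of_le hC1pos hMC1
  -- the generic upper bound
  have hgen : ∀ (a b : ℂ) (ρ σ : ℝ), 0 ≤ ρ → 0 ≤ σ →
      ‖a‖ = ρ → ‖b‖ = σ → 0 < |ρ - s| → 0 < |σ - t| →
      crossRatio a x b y ≤ (ρ + σ) * (s + t) / (|ρ - s| * |σ - t|) := by
    intro a b ρ σ hρ hσ ha hb h1 h2
    have hab : ‖a - b‖ ≤ ρ + σ := by
      have := norm_sub_le a b
      simpa [ha, hb] using this
    have hax : |ρ - s| ≤ ‖a - x‖ := by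
      have := abs_norm_sub_norm_le a x
      simpa [ha, ← hs] using this
    have hby : |σ - t| ≤ ‖b - y‖ := by
      have := abs_norm_sub_norm_le b y
      simpa [hb, ← ht] using this
    simp only [crossRatio]
    apply div_le_div₀ (by positivity)
    · rw [hxy]
      exact mul_le_mul_of_nonneg_right hab (by linarith)
    · positivity
    · exact mul_le_mul hax hby (le_of_lt h2) (le_trans (le_of_lt h1) hax)
  have hkey : (1 - s) * (t - r) ≤ (s - r) * (1 - t) := by
    nlinarith [mul_nonneg (sub_nonneg.2 hle) (by linarith : (0:ℝ) ≤ 1 - r)]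
  have habs1s : |(1:ℝ) - s| = 1 - s := abs_of_pos h1s
  have habs1t : |(1:ℝ) - t| = 1 - t := abs_of_pos h1t
  have habsrs : |r - s| = s - r := by rw [abs_sub_comm]; exact abs_of_pos hsr
  have habsrt : |r - t| = t - r := by rw [abs_sub_comm]; exact abs_of_pos htr
  -- upper bound for all boundary pairs
  have hub : ∀ p : ℂ × ℂ, p ∈ (frontier (annulus r) ×ˢ frontier (annulus r)) →
      crossRatio p.1 x p.2 y ≤ M := by
    rintro ⟨a, b⟩ ⟨ha, hb⟩
    rw [frontier_annulus r hr0 hr1] at ha hb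
    rcases ha with ha | ha <;> rcases hb with hb | hb
    · refine le_trans (hgen a b r r (le_of_lt hr0) (le_of_lt hr0) ha hb
        (by rw [habsrs]; exact hsr) (by rw [habsrt]; exact htr)) ?_
      rw [habsrs, habsrt]
      refine le_trans (le_of_eq ?_) hMC2
      rw [hC2]; ring
    · refine le_trans (hgen a b r 1 (le_of_lt hr0) zero_le_one ha hb
        (by rw [habsrs]; exact hsr) (by rw [habs1t]; exact h1t)) ?_
      rw [habsrs, habs1t]
      refine le_trans ?_ hMC3
      rw [hC3, div_le_div_iff₀ (by positivity) (by positivity)]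
      nlinarith [mul_le_mul_of_nonneg_left hkey
        (by positivity : (0:ℝ) ≤ (1 + r) * (s + t))]
    · refine le_trans (hgen a b 1 r zero_le_one (le_of_lt hr0) ha hb
        (by rw [habs1s]; exact h1s) (by rw [habsrt]; exact htr)) ?_
      rw [habs1s, habsrt, ← hC3]
      exact hMC3
    · refine le_trans (hgen a b 1 1 zero_le_one zero_le_one ha hb
        (by rw [habs1s]; exact h1s) (by rw [habs1t]; exact h1t)) ?_
      rw [habs1s, habs1t]
      refine le_trans (le_of_eq ?_) hMC1
      rw [hC1]
      norm_num
  -- candidate points lie on the frontier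
  have habsA : ∀ ρ : ℝ, 0 < ρ → ‖((ρ / s : ℝ) : ℂ) * x‖ = ρ := by
    intro ρ hρ
    rw [habsmul, abs_of_pos (by positivity)]
    exact div_mul_cancel₀ ρ (ne_of_gt hs0)
  have hmem : ∀ ρ σ : ℝ, (ρ = r ∨ ρ = 1) → (σ = r ∨ σ = 1) →
      ((((ρ / s : ℝ) : ℂ) * x), -(((σ / s : ℝ) : ℂ) * x)) ∈
        frontier (annulus r) ×ˢ frontier (annulus r) := by
    intro ρ σ hρ hσ
    have hρ0 : 0 < ρ := by rcases hρ with h | h <;> rw [h] <;> linarith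
    have hσ0 : 0 < σ := by rcases hσ with h | h <;> rw [h] <;> linarith
    rw [frontier_annulus r hr0 hr1]
    constructor
    · show ‖_‖ = r ∨ ‖_‖ = 1
      rcases hρ with h | h
      · left; rw [habsA ρ hρ0, h]
      · right; rw [habsA ρ hρ0, h]
    · show ‖_‖ = r ∨ ‖_‖ = 1
      rw [norm_neg]
      rcases hσ with h | h
      · left; rw [habsA σ hσ0, h]
      · right; rw [habsA σ hσ0, h]
  -- each of C1 C2 C3 is attained
  have hreal : ∀ C : ℝ, C = C1 ∨ C = C2 ∨ C = C3 →
      ∃ p ∈ frontier (annulus r) ×ˢ frontier (annulus r),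
        crossRatio p.1 x p.2 y = C := by
    rintro C (rfl | rfl | rfl)
    · refine ⟨(((1 / s : ℝ) : ℂ) * x, -(((1 / s : ℝ) : ℂ) * x)),
        hmem 1 1 (Or.inr rfl) (Or.inr rfl), ?_⟩
      rw [hA 1 1 zero_le_one zero_le_one, habs1s, habs1t, hC1]
      norm_num
    · refine ⟨(((r / s : ℝ) : ℂ) * x, -(((r / s : ℝ) : ℂ) * x)),
        hmem r r (Or.inl rfl) (Or.inl rfl), ?_⟩
      rw [hA r r (le_of_lt hr0) (le_of_lt hr0), habsrs, habsrt, hC2]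
      ring
    · refine ⟨(((1 / s : ℝ) : ℂ) * x, -(((r / s : ℝ) : ℂ) * x)),
        hmem 1 r (Or.inr rfl) (Or.inl rfl), ?_⟩
      rw [hA 1 r zero_le_one (le_of_lt hr0), habs1s, habsrt, hC3]
  have hMmem : ∃ p ∈ frontier (annulus r) ×ˢ frontier (annulus r),
      crossRatio p.1 x p.2 y = M := by
    rcases max_choice (max C1 C2) C3 with h | h
    · rcases max_choice C1 C2 with h2 | h2
      · exact hreal M (Or.inl (by rw [hM, h, h2]))
      · exact hreal M (Or.inr (Or.inl (by rw [hM, h, h2])))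
    · exact hreal M (Or.inr (Or.inr (by rw [hM, h])))
  have hcrnn : ∀ a b : ℂ, 0 ≤ crossRatio a x b y := by
    intro a b
    simp only [crossRatio]
    positivity
  obtain ⟨q, hq, hqe⟩ := hMmem
  have hdelta : deltaMetric (annulus r) x y = Real.log (1 + M) := by
    unfold deltaMetric
    apply le_antisymm
    · apply csSup_le ⟨_, Set.mem_image_of_mem _ hq⟩
      rintro v ⟨p, hp, rfl⟩
      exact Real.log_le_log (by linarith [hcrnn p.1 p.2]) (by linarith [hub p hp])
    · apply le_csSup
      · refine ⟨Real.log (1 + M), ?_⟩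
        rintro v ⟨p, hp, rfl⟩
        exact Real.log_le_log (by linarith [hcrnn p.1 p.2]) (by linarith [hub p hp])
      · simpa [hqe] using Set.mem_image_of_mem (fun p : ℂ × ℂ => Real.log (1 + crossRatio p.1 x p.2 y)) hq
  rw [hdelta, tanh_half_log (1 + M) (by linarith),
    show (1 + M - 1) / (1 + M + 1) = M / (M + 2) from by ring]
  have hmax0 : (0:ℝ) ≤ max C1 C2 := le_trans (le_of_lt hC1pos) (le_max_left _ _)
  rw [hM, div_add_two_max (max C1 C2) C3 hmax0 (le_of_lt hC3pos),
    div_add_two_max C1 C2 (le_of_lt hC1pos) (le_of_lt hC2pos)]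
  have g1 : C1 / (C1 + 2) = (s + t) / (1 + s * t) := by
    rw [hC1, div_div_add_two _ _ (by positivity),
      show 2 * (s + t) + 2 * ((1 - s) * (1 - t)) = 2 * (1 + s * t) from by ring,
      show 2 * (s + t) = 2 * (s + t) from rfl, mul_div_mul_left _ _ (two_ne_zero)]
  have g2 : C2 / (C2 + 2) = r * (s + t) / (s * t + r ^ 2) := by
    rw [hC2, div_div_add_two _ _ (by positivity),
      show 2 * r * (s + t) + 2 * ((s - r) * (t - r)) = 2 * (s * t + r ^ 2) from by ring,
      show 2 * r * (s + t) = 2 * (r * (s + t)) from by ring,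
      mul_div_mul_left _ _ (two_ne_zero)]
  have g3 : C3 / (C3 + 2) = (s + t) * (1 + r) /
      (2 * (1 - s) * (t - r) + (s + t) * (1 + r)) := by
    rw [hC3, div_div_add_two _ _ (by positivity),
      show (1 + r) * (s + t) + 2 * ((1 - s) * (t - r))
        = 2 * (1 - s) * (t - r) + (s + t) * (1 + r) from by ring,
      show (1 + r) * (s + t) = (s + t) * (1 + r) from by ring]
  rw [g1, g2, g3]
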